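/- Let V be a 2-dimensional real inner product space with a nested sequence of closed cones Cₙ = {αXₙ + βYₙ : αβ ≥ 0} (Cₙ₊₁ ⊆ Cₙ) determined by unit vectors Xₙ, Yₙ, such that the angle θₙ between Xₙ and Yₙ tends to 0. Then the intersection ⋂ₙ Cₙ is a one-dimensional subspace (a line through the origin) of V. -/

import Mathlib

open InnerProductGeometry Filter

/-- The cone determined by `X` and `Y`: `{αX + βY : αβ ≥ 0}`. -/
def cone {V : Type*} [AddCommGroup V] [Module ℝ V] (X Y : V) : Set V :=
  {v | ∃ α β : ℝ, 0 ≤ α * β ∧ v = α • X + β • Y}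

lemma cone_smul {V : Type*} [AddCommGroup V] [Module ℝ V] {X Y : V} (r : ℝ) {v : V}
    (hv : v ∈ cone X Y) : r • v ∈ cone X Y := by
  obtain ⟨α, β, hαβ, rfl⟩ := hv
  refine ⟨r * α, r * β, ?_, by simp [smul_add, smul_smul]⟩
  have : r * α * (r * β) = r ^ 2 * (α * β) := by ring
  rw [this]
  exact mul_nonneg (sq_nonneg r) hαβ

lemma mem_cone_left {V : Type*} [AddCommGroup V] [Module ℝ V] (X Y : V) : X ∈ cone X Y :=
  ⟨1, 0, by norm_num, by simp⟩

/-- Key inequality: any two members of a cone have inner product at least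
`⟪X,Y⟫ * ‖v‖ * ‖w‖` in absolute value. -/
lemma key_ineq {V : Type*} [NormedAddCommGroup V] [InnerProductSpace ℝ V] {X Y : V}
    (hX : ‖X‖ = 1) (hY : ‖Y‖ = 1) {v w : V} (hv : v ∈ cone X Y) (hw : w ∈ cone X Y) :
    (inner ℝ X Y : ℝ) * (‖v‖ * ‖w‖) ≤ |(inner ℝ v w : ℝ)| := by
  obtain ⟨α, β, hαβ, rfl⟩ := hv
  obtain ⟨γ, δ, hγδ, rfl⟩ := hw
  have hcs := abs_real_inner_le_norm X Y
  rw [hX, hY, mul_one] at hcs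
  have hc1 : (inner ℝ X Y : ℝ) ≤ 1 := le_trans (le_abs_self _) hcs
  have hc1' : (-1 : ℝ) ≤ (inner ℝ X Y : ℝ) := neg_le_of_abs_le hcs
  have hXX : (inner ℝ X X : ℝ) = 1 := by
    rw [real_inner_self_eq_norm_mul_norm, hX]; norm_num
  have hYY : (inner ℝ Y Y : ℝ) = 1 := by
    rw [real_inner_self_eq_norm_mul_norm, hY]; norm_num
  have hYX : (inner ℝ Y X : ℝ) = (inner ℝ X Y : ℝ) := real_inner_comm X Y
  have hiv : (inner ℝ (α • X + β • Y) (γ • X + δ • Y) : ℝ)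
      = α * γ + β * δ + (α * δ + β * γ) * (inner ℝ X Y : ℝ) := by
    simp only [inner_add_left, inner_add_right, real_inner_smul_left, real_inner_smul_right,
      hXX, hYY, hYX]
    ring
  have hnv : ‖α • X + β • Y‖ ^ 2
      = α ^ 2 + β ^ 2 + 2 * α * β * (inner ℝ X Y : ℝ) := by
    rw [← real_inner_self_eq_norm_sq]
    simp only [inner_add_left, inner_add_right, real_inner_smul_left, real_inner_smul_right,
      hXX, hYY, hYX]
    ring
  have hnw : ‖γ • X + δ • Y‖ ^ 2
      = γ ^ 2 + δ ^ 2 + 2 * γ * δ * (inner ℝ X Y : ℝ) := by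
    rw [← real_inner_self_eq_norm_sq]
    simp only [inner_add_left, inner_add_right, real_inner_smul_left, real_inner_smul_right,
      hXX, hYY, hYX]
    ring
  set c : ℝ := (inner ℝ X Y : ℝ)
  rcases le_or_gt c 0 with h0 | h0
  · calc c * (‖α • X + β • Y‖ * ‖γ • X + δ • Y‖) ≤ 0 :=
        mul_nonpos_iff.mpr (Or.inr ⟨h0, by positivity⟩)
    _ ≤ _ := abs_nonneg _
  · have hsq : (c * (‖α • X + β • Y‖ * ‖γ • X + δ • Y‖)) ^ 2
        ≤ |(inner ℝ (α • X + β • Y) (γ • X + δ • Y) : ℝ)| ^ 2 := by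
      rw [sq_abs, hiv]
      have expand : (c * (‖α • X + β • Y‖ * ‖γ • X + δ • Y‖)) ^ 2
          = c ^ 2 * ((α ^ 2 + β ^ 2 + 2 * α * β * c) * (γ ^ 2 + δ ^ 2 + 2 * γ * δ * c)) := by
        rw [mul_pow, mul_pow, hnv, hnw]
      rw [expand]
      have key : (α * γ + β * δ + (α * δ + β * γ) * c) ^ 2
          - c ^ 2 * ((α ^ 2 + β ^ 2 + 2 * α * β * c) * (γ ^ 2 + δ ^ 2 + 2 * γ * δ * c))
          = (1 - c ^ 2) * ((α * γ + β * δ) ^ 2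
            + 2 * c * ((α ^ 2 + β ^ 2) * (γ * δ) + (α * β) * (γ ^ 2 + δ ^ 2))
            + 4 * c ^ 2 * ((α * β) * (γ * δ))) := by ring
      have h1 : (0:ℝ) ≤ 1 - c ^ 2 := by nlinarith
      have h2 : (0:ℝ) ≤ (α * γ + β * δ) ^ 2
          + 2 * c * ((α ^ 2 + β ^ 2) * (γ * δ) + (α * β) * (γ ^ 2 + δ ^ 2))
          + 4 * c ^ 2 * ((α * β) * (γ * δ)) := by positivity
      nlinarith [mul_nonneg h1 h2]
    have hb : (0:ℝ) ≤ c * (‖α • X + β • Y‖ * ‖γ • X + δ • Y‖) := by positivity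
    exact (pow_le_pow_iff_left₀ hb (abs_nonneg _) two_ne_zero).mp hsq

lemma cone_isClosed {V : Type*} [NormedAddCommGroup V] [InnerProductSpace ℝ V]
    [FiniteDimensional ℝ V] (hdim : Module.finrank ℝ V = 2) {X Y : V}
    (h : LinearIndependent ℝ ![X, Y]) : IsClosed (cone X Y) := by
  have hcard : Fintype.card (Fin 2) = Module.finrank ℝ V := by simp [hdim]
  set b := basisOfLinearIndependentOfCardEqFinrank h hcard with hb
  have hb0 : b 0 = X := by rw [hb, coe_basisOfLinearIndependentOfCardEqFinrank]; rfl
  have hb1 : b 1 = Y := by rw [hb, coe_basisOfLinearIndependentOfCardEqFinrank]; rfl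
  have hset : cone X Y = {v | (0:ℝ) ≤ b.coord 0 v * b.coord 1 v} := by
    ext v
    constructor
    · rintro ⟨α, β, hαβ, rfl⟩
      have h0 : b.coord 0 (α • X + β • Y) = α := by
        rw [← hb0, ← hb1]
        simp [Module.Basis.coord_apply, Module.Basis.repr_self]
      have h1 : b.coord 1 (α • X + β • Y) = β := by
        rw [← hb0, ← hb1]
        simp [Module.Basis.coord_apply, Module.Basis.repr_self]
      simp only [Set.mem_setOf_eq, h0, h1]
      exact hαβ
    · intro hv
      refine ⟨b.coord 0 v, b.coord 1 v, hv, ?_⟩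
      have := b.sum_repr v
      rw [Fin.sum_univ_two, hb0, hb1] at this
      simp only [Module.Basis.coord_apply]
      exact this.symm
  rw [hset]
  have hcont : Continuous fun v => (b.coord 0 v) * (b.coord 1 v) :=
    ((b.coord 0).continuous_of_finiteDimensional).mul
      ((b.coord 1).continuous_of_finiteDimensional)
  exact isClosed_le continuous_const hcont

lemma linIndep_of_angle {V : Type*} [NormedAddCommGroup V] [InnerProductSpace ℝ V]
    {X Y : V} (hX : ‖X‖ = 1) (hYn : ‖Y‖ = 1) (hpos : 0 < angle X Y)
    (hlt : angle X Y < Real.pi) : LinearIndependent ℝ ![X, Y] := by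
  rw [LinearIndependent.pair_iff]
  intro s t hst
  have hX0 : X ≠ 0 := by intro h; rw [h] at hX; simp at hX
  have hY0 : Y ≠ 0 := by intro h; rw [h] at hYn; simp at hYn
  by_cases ht : t = 0
  · subst ht
    simp only [zero_smul, add_zero] at hst
    rcases smul_eq_zero.mp hst with h | h
    · exact ⟨h, rfl⟩
    · exact absurd h hX0
  · exfalso
    have h5 : t • Y = (-s) • X := by
      rw [neg_smul, eq_neg_iff_add_eq_zero, add_comm]
      exact hst
    have hY : Y = (-s / t) • X := by
      have := congrArg (fun u => t⁻¹ • u) h5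
      simp only [smul_smul, inv_mul_cancel₀ ht, one_smul] at this
      rw [this, div_eq_inv_mul, mul_comm]
    rcases lt_trichotomy (-s / t) 0 with hr | hr | hr
    · exact absurd (angle_eq_pi_iff.mpr ⟨hX0, -s / t, hr, hY⟩) (ne_of_lt hlt)
    · rw [hr, zero_smul] at hY
      exact hY0 hY
    · exact absurd (angle_eq_zero_iff.mpr ⟨hX0, -s / t, hr, hY⟩).symm (ne_of_lt hpos)

/-- A nested sequence of cones `Cₙ = {αXₙ + βYₙ : αβ ≥ 0}` determined by unit vectors
whose angles tend to `0` intersects in a one-dimensional subspace of a 2-dimensional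
real inner product space. -/
theorem nested_cones_intersection_is_line {V : Type*} [NormedAddCommGroup V]
    [InnerProductSpace ℝ V] [FiniteDimensional ℝ V] (hdim : Module.finrank ℝ V = 2)
    (X Y : ℕ → V) (hX : ∀ n, ‖X n‖ = 1) (hY : ∀ n, ‖Y n‖ = 1)
    (hangle_pos : ∀ n, 0 < angle (X n) (Y n))
    (hangle_lt : ∀ n, angle (X n) (Y n) < Real.pi)
    (hnested : ∀ n, cone (X (n + 1)) (Y (n + 1)) ⊆ cone (X n) (Y n))
    (hangle : Tendsto (fun n => angle (X n) (Y n)) atTop (nhds 0)) :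
    ∃ L : Submodule ℝ V, Module.finrank ℝ L = 1 ∧
      (⋂ n, cone (X n) (Y n)) = (L : Set V) := by
  have hsub : ∀ m n, m ≤ n → cone (X n) (Y n) ⊆ cone (X m) (Y m) := by
    intro m n hmn
    induction n with
    | zero => simp_all
    | succ k ih =>
      rcases Nat.lt_or_ge m (k+1) with h | h
      · exact le_trans (hnested k) (ih (Nat.lt_succ_iff.mp h))
      · have : m = k + 1 := le_antisymm hmn h
        subst this; exact le_refl _
  obtain ⟨Z, hZs, φ, hφ, hZt⟩ := (isCompact_sphere (0:V) 1).tendsto_subseq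
    (x := X) (fun n => by simp [hX n])
  have hZ1 : ‖Z‖ = 1 := by simpa using hZs
  have hZ0 : Z ≠ 0 := by intro h; rw [h] at hZ1; simp at hZ1
  have hZmem : ∀ m, Z ∈ cone (X m) (Y m) := by
    intro m
    have hclosed : IsClosed (cone (X m) (Y m)) :=
      cone_isClosed hdim (linIndep_of_angle (hX m) (hY m) (hangle_pos m) (hangle_lt m))
    refine hclosed.mem_of_tendsto hZt ?_
    filter_upwards [eventually_ge_atTop m] with k hk
    exact hsub m (φ k) (le_trans hk (hφ.le_apply)) (mem_cone_left _ _)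
  have hctend : Tendsto (fun n => (inner ℝ (X n) (Y n) : ℝ)) atTop (nhds 1) := by
    have heq : ∀ n, (inner ℝ (X n) (Y n) : ℝ) = Real.cos (angle (X n) (Y n)) := by
      intro n; rw [cos_angle, hX, hY]; norm_num
    simp only [heq]
    have := (Real.continuous_cos.tendsto 0).comp hangle
    simpa [Function.comp_def] using this
  refine ⟨Submodule.span ℝ {Z}, finrank_span_singleton hZ0, ?_⟩
  ext v
  simp only [Set.mem_iInter, SetLike.mem_coe, Submodule.mem_span_singleton]
  constructor
  · intro hv
    by_cases hv0 : v = 0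
    · exact ⟨0, by simp [hv0]⟩
    have hle : ∀ n, (inner ℝ (X n) (Y n) : ℝ) * (‖v‖ * ‖Z‖) ≤ |(inner ℝ v Z : ℝ)| :=
      fun n => key_ineq (hX n) (hY n) (hv n) (hZmem n)
    have hlim : Tendsto (fun n => (inner ℝ (X n) (Y n) : ℝ) * (‖v‖ * ‖Z‖)) atTop
        (nhds (‖v‖ * ‖Z‖)) := by
      have := hctend.mul_const (‖v‖ * ‖Z‖)
      simpa using this
    have h1 : ‖v‖ * ‖Z‖ ≤ |(inner ℝ v Z : ℝ)| :=
      le_of_tendsto hlim (Eventually.of_forall hle)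
    have h2 : |(inner ℝ v Z : ℝ)| = ‖v‖ * ‖Z‖ :=
      le_antisymm (abs_real_inner_le_norm v Z) h1
    rcases (abs_eq (by positivity : (0:ℝ) ≤ ‖v‖ * ‖Z‖)).mp h2 with h3 | h3
    · have h6 := inner_eq_norm_mul_iff_real.mp h3
      rw [hZ1, one_smul] at h6
      exact ⟨‖v‖, h6.symm⟩
    · have h4 : (inner ℝ v (-Z) : ℝ) = ‖v‖ * ‖-Z‖ := by
        rw [inner_neg_right, norm_neg]; linarith
      have h6 := inner_eq_norm_mul_iff_real.mp h4
      rw [norm_neg, hZ1, one_smul] at h6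
      exact ⟨-‖v‖, by rw [neg_smul, ← smul_neg]; exact h6.symm⟩
  · rintro ⟨r, rfl⟩ n
    exact cone_smul r (hZmem n)
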